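/- Suppose $v_1,\ldots,v_n > 0$ with $\sum_i v_i = 1$ and $0 < T_B \le T_A$. Let player $A$'s mixed strategy have marginals $X_{A,i} \sim \mathrm{Unif}[0, 2T_A v_i]$. Then for every pure strategy $x_B \in \mathbb{R}_+^n$ of player $B$ with $\sum_i x_{B,i} \le T_B$, the expected utility of player $A$ satisfies $\sum_{i=1}^n v_i\, \mathbb{P}(X_{A,i} > x_{B,i}) = 1 - \sum_{i=1}^n \min\left(v_i, \frac{x_{B,i}}{2T_A}\right) \ge 1 - \frac{T_B}{2T_A}$. -/

import Mathlib

open MeasureTheory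

/-- The uniform probability measure on `[0, b]`. -/
noncomputable def unifIcc (b : ℝ) : Measure ℝ :=
  (ENNReal.ofReal b)⁻¹ • volume.restrict (Set.Icc 0 b)

lemma unifIcc_Ioi (b x : ℝ) (hb : 0 < b) (hx : 0 ≤ x) :
    ((unifIcc b) (Set.Ioi x)).toReal = max (b - x) 0 / b := by
  have hset : Set.Ioi x ∩ Set.Icc 0 b = Set.Ioc x b := by
    ext y
    simp only [Set.mem_inter_iff, Set.mem_Ioi, Set.mem_Icc, Set.mem_Ioc]
    constructor
    · rintro ⟨h1, _, h3⟩; exact ⟨h1, h3⟩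
    · rintro ⟨h1, h2⟩; exact ⟨h1, le_trans hx h1.le, h2⟩
  rw [unifIcc, Measure.smul_apply, Measure.restrict_apply measurableSet_Ioi, hset,
    Real.volume_Ioc, smul_eq_mul, ENNReal.toReal_mul, ENNReal.toReal_inv,
    ENNReal.toReal_ofReal hb.le, ENNReal.toReal_ofReal']
  rw [inv_mul_eq_div]

theorem stmt_16 (n : ℕ) (v : Fin n → ℝ) (TA TB : ℝ)
    (hv : ∀ i, 0 < v i) (hsv : ∑ i, v i = 1)
    (hTB : 0 < TB) (hT : TB ≤ TA)
    (xB : Fin n → ℝ) (hxB : ∀ i, 0 ≤ xB i) (hbudget : ∑ i, xB i ≤ TB) :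
    (∑ i, v i * ((unifIcc (2 * TA * v i)) (Set.Ioi (xB i))).toReal)
        = 1 - ∑ i, min (v i) (xB i / (2 * TA)) ∧
      1 - TB / (2 * TA) ≤ 1 - ∑ i, min (v i) (xB i / (2 * TA)) := by
  have hTA : 0 < TA := lt_of_lt_of_le hTB hT
  have h2TA : 0 < 2 * TA := by linarith
  have hterm : ∀ i, v i * ((unifIcc (2 * TA * v i)) (Set.Ioi (xB i))).toReal
      = v i - min (v i) (xB i / (2 * TA)) := by
    intro i
    have hb : 0 < 2 * TA * v i := mul_pos h2TA (hv i)
    rw [unifIcc_Ioi _ _ hb (hxB i)]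
    rcases le_or_gt (xB i) (2 * TA * v i) with h | h
    · have hmax : max (2 * TA * v i - xB i) 0 = 2 * TA * v i - xB i :=
        max_eq_left (by linarith)
      have hmin : min (v i) (xB i / (2 * TA)) = xB i / (2 * TA) := by
        apply min_eq_right
        rw [div_le_iff₀ h2TA]
        linarith [h]
      rw [hmax, hmin]
      have hvi : v i ≠ 0 := (hv i).ne'
      field_simp
    · have hmax : max (2 * TA * v i - xB i) 0 = 0 := max_eq_right (by linarith)
      have hmin : min (v i) (xB i / (2 * TA)) = v i := by
        apply min_eq_left
        rw [le_div_iff₀ h2TA]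
        linarith [h]
      rw [hmax, hmin]
      simp
  have h1 : (∑ i, v i * ((unifIcc (2 * TA * v i)) (Set.Ioi (xB i))).toReal)
      = 1 - ∑ i, min (v i) (xB i / (2 * TA)) := by
    simp_rw [hterm]
    rw [Finset.sum_sub_distrib, hsv]
  refine ⟨h1, ?_⟩
  have h2 : ∑ i, min (v i) (xB i / (2 * TA)) ≤ ∑ i, xB i / (2 * TA) :=
    Finset.sum_le_sum fun i _ => min_le_right _ _
  rw [← Finset.sum_div] at h2
  have : (∑ i, xB i) / (2 * TA) ≤ TB / (2 * TA) := by gcongr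
  linarith
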